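/- arXiv:2401.00533 — 2 statements merged into one kernel-verified Lean document; each statement's English description precedes it below -/
import Mathlib

section
/- Let B, C ∈ ℂ^{n×n} be Hermitian commuting matrices with B having all diagonal structure: fix indices r ≠ s and let β_r = B_rr, β_s = B_ss. Then |e_r^T(BC)e_s − β_r C_rs| ≤ (√2/2)·off(B)·‖C‖₂ and |e_r^T(CB)e_s − β_s C_rs| ≤ (√2/2)·off(B)·‖C‖₂, where off(B) = ‖B − diag(B)‖_F and ‖·‖₂ is the spectral norm. -/
open Matrix

noncomputable def frobNorm {ι κ : Type*} [Fintype ι] [Fintype κ] (A : Matrix ι κ ℂ) : ℝ :=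
  Real.sqrt (∑ i, ∑ j, ‖A i j‖ ^ 2)

noncomputable def offNorm {ι : Type*} [Fintype ι] [DecidableEq ι] (A : Matrix ι ι ℂ) : ℝ :=
  frobNorm (A - Matrix.diagonal (fun i => A i i))

noncomputable def specNorm {ι : Type*} [Fintype ι] [DecidableEq ι] (A : Matrix ι ι ℂ) : ℝ :=
  ‖Matrix.toEuclideanCLM (𝕜 := ℂ) A‖

section aux

variable {n : ℕ}

/-- inner-product bound: `‖⟪x, C y⟫‖ ≤ ‖x‖ * specNorm C * ‖y‖`. -/
lemma key_inner_bound (C : Matrix (Fin n) (Fin n) ℂ) (x y : EuclideanSpace ℂ (Fin n)) :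
    ‖(inner ℂ x (Matrix.toEuclideanCLM (𝕜 := ℂ) C y) : ℂ)‖ ≤ ‖x‖ * specNorm C * ‖y‖ := by
  calc ‖(inner ℂ x (Matrix.toEuclideanCLM (𝕜 := ℂ) C y) : ℂ)‖
      ≤ ‖x‖ * ‖Matrix.toEuclideanCLM (𝕜 := ℂ) C y‖ := norm_inner_le_norm _ _
    _ ≤ ‖x‖ * (specNorm C * ‖y‖) := by
        gcongr
        exact (Matrix.toEuclideanCLM (𝕜 := ℂ) C).le_opNorm y
    _ = ‖x‖ * specNorm C * ‖y‖ := by ring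

lemma row_sq_le (B : Matrix (Fin n) (Fin n) ℂ) (hB : B.IsHermitian) (r : Fin n) :
    ∑ k, ‖(B - Matrix.diagonal (fun i => B i i)) r k‖ ^ 2 ≤
      (1 / 2) * ∑ i, ∑ j, ‖(B - Matrix.diagonal (fun i => B i i)) i j‖ ^ 2 := by
  set M := B - Matrix.diagonal (fun i => B i i) with hM
  have hMsym : ∀ i j, ‖M i j‖ = ‖M j i‖ := by
    intro i j
    have : M j i = star (M i j) := by
      simp only [hM, Matrix.sub_apply, Matrix.diagonal_apply, star_sub]
      rw [← hB.apply i j]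
      rcases eq_or_ne i j with h | h
      · subst h; simp [hB.apply]
      · simp [h, Ne.symm h]
    rw [this, norm_star]
  have hMrr : M r r = 0 := by simp [hM]
  have h1 : ∑ i, ∑ j, ‖M i j‖ ^ 2 =
      (∑ j, ‖M r j‖ ^ 2) + ∑ i ∈ Finset.univ.erase r, ∑ j, ‖M i j‖ ^ 2 := by
    rw [← Finset.add_sum_erase _ _ (Finset.mem_univ r)]
  have h2 : ∑ i ∈ Finset.univ.erase r, ‖M i r‖ ^ 2 ≤
      ∑ i ∈ Finset.univ.erase r, ∑ j, ‖M i j‖ ^ 2 := by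
    apply Finset.sum_le_sum
    intro i _
    exact Finset.single_le_sum (f := fun j => ‖M i j‖ ^ 2) (fun j _ => by positivity)
      (Finset.mem_univ r)
  have h3 : ∑ i ∈ Finset.univ.erase r, ‖M i r‖ ^ 2 = ∑ j, ‖M r j‖ ^ 2 := by
    rw [show ∑ j, ‖M r j‖ ^ 2 = ∑ j ∈ Finset.univ.erase r, ‖M r j‖ ^ 2 by
      rw [← Finset.add_sum_erase _ _ (Finset.mem_univ r), hMrr]; simp]
    exact Finset.sum_congr rfl fun i _ => by rw [hMsym]
  nlinarith [h1, h2, h3]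

lemma sqrt_half_bound (a t : ℝ) (ht : 0 ≤ t) (h : a ≤ (1/2) * t) (ha : 0 ≤ a) :
    Real.sqrt a ≤ Real.sqrt 2 / 2 * Real.sqrt t := by
  have : Real.sqrt a ≤ Real.sqrt ((1/2) * t) := Real.sqrt_le_sqrt h
  calc Real.sqrt a ≤ Real.sqrt ((1/2) * t) := this
    _ = Real.sqrt (1/2) * Real.sqrt t := Real.sqrt_mul (by norm_num) t
    _ = Real.sqrt 2 / 2 * Real.sqrt t := by
        congr 1
        have h2 : (Real.sqrt 2 / 2) ^ 2 = 1 / 2 := by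
          rw [div_pow, Real.sq_sqrt (by norm_num : (0:ℝ) ≤ 2)]; norm_num
        rw [← h2, Real.sqrt_sq (by positivity)]

end aux

/-- For commuting Hermitian `B`, `C` and indices `r ≠ s`,
`|(BC)_{rs} - B_{rr} C_{rs}| ≤ (√2/2)·off(B)·‖C‖₂` and
`|(CB)_{rs} - B_{ss} C_{rs}| ≤ (√2/2)·off(B)·‖C‖₂`. -/
theorem stmt_6 {n : ℕ} (B C : Matrix (Fin n) (Fin n) ℂ)
    (hB : B.IsHermitian) (hC : C.IsHermitian) (hcomm : B * C = C * B)
    (r s : Fin n) (hrs : r ≠ s) :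
    ‖(B * C) r s - B r r * C r s‖ ≤ Real.sqrt 2 / 2 * offNorm B * specNorm C ∧
    ‖(C * B) r s - B s s * C r s‖ ≤ Real.sqrt 2 / 2 * offNorm B * specNorm C := by
  set M := B - Matrix.diagonal (fun i => B i i) with hM
  have total_nonneg : (0:ℝ) ≤ ∑ i, ∑ j, ‖M i j‖ ^ 2 := by positivity
  -- part 1
  constructor
  · -- x := conj of row r of M, y := e_s
    set x : EuclideanSpace ℂ (Fin n) := (WithLp.equiv 2 _).symm (fun k => star (M r k)) with hx
    set y : EuclideanSpace ℂ (Fin n) := EuclideanSpace.single s 1 with hy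
    have hval : (inner ℂ x (Matrix.toEuclideanCLM (𝕜 := ℂ) C y) : ℂ) =
        (B * C) r s - B r r * C r s := by
      rw [PiLp.inner_apply]
      simp only [RCLike.inner_apply']
      have hTy : ∀ k, (Matrix.toEuclideanCLM (𝕜 := ℂ) C y) k = C k s := by
        intro k
        have := Matrix.ofLp_toEuclideanCLM (𝕜 := ℂ) C y
        have : (Matrix.toEuclideanCLM (𝕜 := ℂ) C y) k = (Matrix.toLin' C fun j => y j) k := by
          exact congrFun this k
        rw [this]
        simp [Matrix.toLin'_apply, Matrix.mulVec, dotProduct, hy,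
          EuclideanSpace.single_apply, mul_comm]
      simp only [hTy]
      have hxk : ∀ k, (starRingEnd ℂ) (x k) = M r k := by
        intro k; simp [hx, WithLp.equiv_symm_apply, PiLp.toLp_apply]
      simp only [hxk]
      calc ∑ k, M r k * C k s
          = ∑ k, (B r k * C k s - if k = r then B r r * C r s else 0) := by
            refine Finset.sum_congr rfl fun k _ => ?_
            rcases eq_or_ne k r with h | h
            · subst h; simp [hM, sub_mul]
            · simp [hM, Matrix.diagonal_apply, h, Ne.symm h, sub_mul]
        _ = (∑ k, B r k * C k s) - ∑ k, if k = r then B r r * C r s else 0 :=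
            Finset.sum_sub_distrib _ _
        _ = (B * C) r s - B r r * C r s := by
            rw [Matrix.mul_apply, Finset.sum_ite_eq' Finset.univ r]
            simp
    have hxn : ‖x‖ ≤ Real.sqrt 2 / 2 * offNorm B := by
      rw [EuclideanSpace.norm_eq]
      have : ∑ k, ‖x k‖ ^ 2 = ∑ k, ‖M r k‖ ^ 2 := by
        refine Finset.sum_congr rfl fun k _ => ?_
        simp [hx, WithLp.equiv_symm_apply, PiLp.toLp_apply]
      rw [this]
      exact sqrt_half_bound _ _ total_nonneg (row_sq_le B hB r) (by positivity)
    have hyn : ‖y‖ = 1 := by simp [hy, EuclideanSpace.norm_single]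
    calc ‖(B * C) r s - B r r * C r s‖
        = ‖(inner ℂ x (Matrix.toEuclideanCLM (𝕜 := ℂ) C y) : ℂ)‖ := by rw [hval]
      _ ≤ ‖x‖ * specNorm C * ‖y‖ := key_inner_bound C x y
      _ ≤ (Real.sqrt 2 / 2 * offNorm B) * specNorm C * 1 := by
          rw [hyn]
          gcongr <;> first | exact norm_nonneg _ | exact mul_nonneg zero_le_one (norm_nonneg _) | positivity
      _ = Real.sqrt 2 / 2 * offNorm B * specNorm C := by ring
  · -- x := e_r, y := column s of M
    set x : EuclideanSpace ℂ (Fin n) := EuclideanSpace.single r 1 with hx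
    set y : EuclideanSpace ℂ (Fin n) := (WithLp.equiv 2 _).symm (fun k => M k s) with hy
    have hval : (inner ℂ x (Matrix.toEuclideanCLM (𝕜 := ℂ) C y) : ℂ) =
        (C * B) r s - B s s * C r s := by
      rw [PiLp.inner_apply]
      simp only [RCLike.inner_apply']
      have hTy : ∀ k, (Matrix.toEuclideanCLM (𝕜 := ℂ) C y) k = ∑ l, C k l * M l s := by
        intro k
        have h1 := Matrix.ofLp_toEuclideanCLM (𝕜 := ℂ) C y
        have h2 : (Matrix.toEuclideanCLM (𝕜 := ℂ) C y) k = (Matrix.toLin' C fun j => y j) k :=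
          congrFun h1 k
        rw [h2]
        simp [Matrix.toLin'_apply, Matrix.mulVec, dotProduct, hy,
          WithLp.equiv_symm_apply, PiLp.toLp_apply]
      simp only [hTy]
      have hxk : ∀ k, (starRingEnd ℂ) (x k) = if k = r then 1 else 0 := by
        intro k
        simp [hx, EuclideanSpace.single_apply, apply_ite (starRingEnd ℂ)]
      simp only [hxk, ite_mul, one_mul, zero_mul]
      rw [Finset.sum_ite_eq' Finset.univ r _]
      simp only [Finset.mem_univ, if_true]
      calc ∑ l, C r l * M l s
          = ∑ l, (C r l * B l s - if l = s then C r s * B s s else 0) := by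
            refine Finset.sum_congr rfl fun l _ => ?_
            rcases eq_or_ne l s with h | h
            · subst h; simp [hM, mul_sub]
            · simp [hM, Matrix.diagonal_apply, h, Ne.symm h, mul_sub]
        _ = (∑ l, C r l * B l s) - ∑ l, if l = s then C r s * B s s else 0 :=
            Finset.sum_sub_distrib _ _
        _ = (C * B) r s - B s s * C r s := by
            rw [Matrix.mul_apply, Finset.sum_ite_eq' Finset.univ s]
            simp [mul_comm]
    have hyn : ‖y‖ ≤ Real.sqrt 2 / 2 * offNorm B := by
      rw [EuclideanSpace.norm_eq]
      have h1 : ∑ k, ‖y k‖ ^ 2 = ∑ k, ‖M s k‖ ^ 2 := by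
        refine Finset.sum_congr rfl fun k _ => ?_
        have : M k s = star (M s k) := by
          simp only [hM, Matrix.sub_apply, Matrix.diagonal_apply, star_sub]
          rw [← hB.apply s k]
          rcases eq_or_ne s k with h | h
          · subst h; simp [hB.apply]
          · simp [h, Ne.symm h]
        simp [hy, WithLp.equiv_symm_apply, PiLp.toLp_apply, this]
      rw [h1]
      exact sqrt_half_bound _ _ total_nonneg (row_sq_le B hB s) (by positivity)
    have hxn : ‖x‖ = 1 := by simp [hx, EuclideanSpace.norm_single]
    calc ‖(C * B) r s - B s s * C r s‖
        = ‖(inner ℂ x (Matrix.toEuclideanCLM (𝕜 := ℂ) C y) : ℂ)‖ := by rw [hval]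
      _ ≤ ‖x‖ * specNorm C * ‖y‖ := key_inner_bound C x y
      _ ≤ 1 * specNorm C * (Real.sqrt 2 / 2 * offNorm B) := by
          rw [hxn]
          gcongr <;> first | exact norm_nonneg _ | exact mul_nonneg zero_le_one (norm_nonneg _) | positivity
      _ = Real.sqrt 2 / 2 * offNorm B * specNorm C := by ring
end

section
/- Let (B_k)_{k≥0} and (C_k)_{k≥0} be sequences of commuting n×n Hermitian matrices with ‖C_k‖₂ = ‖C_0‖₂ bounded, such that B_k converges to a diagonal matrix diag(β_1,…,β_n). Then for every pair r ≠ s, the sequence (C_k)_{rs}·(β_r − β_s) converges to 0. In particular, if all β_r are distinct, then off(C_k) → 0. -/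
open Matrix

lemma euclidean_coord_le {ι : Type*} [Fintype ι] (y : EuclideanSpace ℂ ι) (i : ι) :
    ‖y i‖ ≤ ‖y‖ := by
  rw [EuclideanSpace.norm_eq]
  have h1 : ‖y i‖ ^ 2 ≤ ∑ j, ‖y j‖ ^ 2 :=
    Finset.single_le_sum (f := fun j => ‖y j‖ ^ 2)
      (fun j _ => sq_nonneg _) (Finset.mem_univ i)
  have := Real.sqrt_le_sqrt h1
  rwa [Real.sqrt_sq (norm_nonneg _)] at this

lemma entry_le_specNorm {ι : Type*} [Fintype ι] [DecidableEq ι] (A : Matrix ι ι ℂ) (i j : ι) :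
    ‖A i j‖ ≤ specNorm A := by
  set x : EuclideanSpace ℂ ι := EuclideanSpace.single j 1
  have hx : ‖x‖ = 1 := by simp [x]
  have happ : (Matrix.toEuclideanCLM (𝕜 := ℂ) A x) i = A i j := by
    have h := Matrix.toEuclideanCLM_toLp (𝕜 := ℂ) A (Pi.single j 1)
    have hx' : x = WithLp.toLp 2 (Pi.single j 1) := rfl
    rw [hx', h]
    simp [Matrix.mulVec, dotProduct, Pi.single_apply, mul_ite, Finset.sum_ite_eq]
  calc ‖A i j‖ = ‖(Matrix.toEuclideanCLM (𝕜 := ℂ) A x) i‖ := by rw [happ]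
    _ ≤ ‖Matrix.toEuclideanCLM (𝕜 := ℂ) A x‖ := euclidean_coord_le _ _
    _ ≤ ‖Matrix.toEuclideanCLM (𝕜 := ℂ) A‖ * ‖x‖ :=
        (Matrix.toEuclideanCLM (𝕜 := ℂ) A).le_opNorm x
    _ = specNorm A := by rw [hx, mul_one, specNorm]

/-- For sequences of commuting Hermitian matrices `B k`, `C k` with `‖C k‖₂ = ‖C 0‖₂`
and `B k` converging (entrywise) to the diagonal matrix `diagonal β`, every off-diagonal
entry satisfies `(C k)_{rs}(β r - β s) → 0`; if all `β r` are distinct, `off(C k) → 0`. -/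
theorem stmt_7 {n : ℕ} (B C : ℕ → Matrix (Fin n) (Fin n) ℂ) (β : Fin n → ℝ)
    (hBh : ∀ k, (B k).IsHermitian) (hCh : ∀ k, (C k).IsHermitian)
    (hcomm : ∀ k, B k * C k = C k * B k)
    (hbound : ∀ k, specNorm (C k) = specNorm (C 0))
    (hlim : ∀ i j, Filter.Tendsto (fun k => B k i j) Filter.atTop
      (nhds (Matrix.diagonal (fun r => (β r : ℂ)) i j))) :
    (∀ r s, r ≠ s →
      Filter.Tendsto (fun k => C k r s * ((β r : ℂ) - (β s : ℂ))) Filter.atTop (nhds 0)) ∧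
    (Function.Injective β →
      Filter.Tendsto (fun k => offNorm (C k)) Filter.atTop (nhds 0)) := by
  set D : Matrix (Fin n) (Fin n) ℂ := Matrix.diagonal (fun r => (β r : ℂ)) with hD
  set M : ℝ := specNorm (C 0) with hM
  have hCbound : ∀ k i j, ‖C k i j‖ ≤ M := fun k i j =>
    (entry_le_specNorm (C k) i j).trans_eq (hbound k)
  -- key identity
  have key : ∀ k r s, C k r s * ((β r : ℂ) - (β s : ℂ))
      = ((D - B k) * C k - C k * (D - B k)) r s := by
    intro k r s
    have hc := hcomm k
    have : (D * C k - C k * D) r s = ((D - B k) * C k - C k * (D - B k)) r s := by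
      have heq : D * C k - C k * D = (D - B k) * C k - C k * (D - B k) := by
        rw [sub_mul, mul_sub, hc]; abel
      rw [heq]
    rw [← this]
    simp [Matrix.sub_apply, Matrix.diagonal_mul, Matrix.mul_diagonal, hD]
    ring
  -- each entry of D - B k tends to 0
  have hE : ∀ i j, Filter.Tendsto (fun k => (D - B k) i j) Filter.atTop (nhds 0) := by
    intro i j
    have := (hlim i j).const_sub (D i j)
    simpa using this
  have main : ∀ r s, Filter.Tendsto (fun k => C k r s * ((β r : ℂ) - (β s : ℂ)))
      Filter.atTop (nhds 0) := by
    intro r s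
    have h1 : Filter.Tendsto (fun k => ((D - B k) * C k - C k * (D - B k)) r s)
        Filter.atTop (nhds 0) := by
      have hA : Filter.Tendsto (fun k => ((D - B k) * C k) r s) Filter.atTop (nhds 0) := by
        have : ∀ k, ((D - B k) * C k) r s = ∑ t, (D - B k) r t * C k t s := by
          intro k; simp [Matrix.mul_apply]
        simp only [this]
        rw [show (0 : ℂ) = ∑ t : Fin n, 0 by simp]
        refine tendsto_finset_sum _ (fun t _ => ?_)
        apply squeeze_zero_norm (a := fun k => ‖(D - B k) r t‖ * M) ?_ ?_
        · intro k
          rw [norm_mul]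
          exact mul_le_mul_of_nonneg_left (hCbound k t s) (norm_nonneg _)
        · have := ((hE r t).norm).mul_const M
          simpa using this
      have hB' : Filter.Tendsto (fun k => (C k * (D - B k)) r s) Filter.atTop (nhds 0) := by
        have : ∀ k, (C k * (D - B k)) r s = ∑ t, C k r t * (D - B k) t s := by
          intro k; simp [Matrix.mul_apply]
        simp only [this]
        rw [show (0 : ℂ) = ∑ t : Fin n, 0 by simp]
        refine tendsto_finset_sum _ (fun t _ => ?_)
        apply squeeze_zero_norm (a := fun k => ‖(D - B k) t s‖ * M) ?_ ?_
        · intro k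
          rw [norm_mul, mul_comm]
          exact mul_le_mul_of_nonneg_left (hCbound k r t) (norm_nonneg _)
        · have := ((hE t s).norm).mul_const M
          simpa using this
      have := hA.sub hB'
      simpa using this
    simpa only [← key] using h1
  refine ⟨fun r s _ => main r s, fun hinj => ?_⟩
  -- off-diagonal entries tend to 0
  have hoff : ∀ r s, r ≠ s → Filter.Tendsto (fun k => C k r s) Filter.atTop (nhds 0) := by
    intro r s hrs
    have hne : ((β r : ℂ) - (β s : ℂ)) ≠ 0 := by
      intro h
      apply hrs
      apply hinj
      have : (β r : ℂ) = (β s : ℂ) := by linear_combination h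
      exact_mod_cast this
    have := (main r s).div_const ((β r : ℂ) - (β s : ℂ))
    simp only [zero_div] at this
    convert this using 2 with k
    field_simp
  -- now offNorm → 0
  have hsum : Filter.Tendsto
      (fun k => ∑ i, ∑ j, ‖(C k - Matrix.diagonal (fun i => C k i i)) i j‖ ^ 2)
      Filter.atTop (nhds 0) := by
    rw [show (0 : ℝ) = ∑ i : Fin n, ∑ j : Fin n, 0 by simp]
    refine tendsto_finset_sum _ (fun i _ => tendsto_finset_sum _ (fun j _ => ?_))
    by_cases hij : i = j
    · subst hij
      simp [Matrix.sub_apply, Matrix.diagonal_apply_eq]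
    · have : ∀ k, (C k - Matrix.diagonal (fun i => C k i i)) i j = C k i j := by
        intro k
        simp [Matrix.sub_apply, Matrix.diagonal_apply_ne _ hij]
      simp only [this]
      have := ((hoff i j hij).norm).pow 2
      simpa using this
  have := (Real.continuous_sqrt.tendsto 0).comp hsum
  simpa [offNorm, frobNorm, Function.comp_def] using this
end
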